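/- Assume the Markov chain with transition kernel P is m-recurrent for some nonzero σ-finite measure m. Then for any r ∈ (0,1) there exist a set A ∈ 𝓑 with 0 < m(A) < ∞, a positive integer k and a constant s > 0 such that for all x ∈ A, m({ y ∈ A : p^1(x,y) + p^2(x,y) + ⋯ + p^k(x,y) > s }) > r·m(A). -/

import Mathlib

open MeasureTheory ProbabilityTheory
open scoped ENNReal NNReal

noncomputable section

/-- The hitting time `T_A = inf {n ≥ 1 : ω n ∈ A}`, with value `⊤ : ℕ∞` if no such `n` exists. -/
def hitTime {S : Type*} (A : Set S) (ω : ℕ → S) : ℕ∞ :=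
  sInf ((fun k : ℕ => (k : ℕ∞)) '' {k : ℕ | 1 ≤ k ∧ ω k ∈ A})

/-- `IsMarkovPath K μ₀ L` says that `L` is the law on path space `ℕ → E` of the
time-homogeneous Markov chain with transition kernel `K` and initial distribution `μ₀`
(the measure produced by the Ionescu–Tulcea construction), characterized through its
finite-dimensional distributions. -/
def IsMarkovPath {E : Type*} [MeasurableSpace E] (K : Kernel E E) (μ₀ : Measure E)
    (L : Measure (ℕ → E)) : Prop :=
  IsProbabilityMeasure L ∧
    L.map (fun ω => ω 0) = μ₀ ∧
    ∀ n : ℕ,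
      L.map (fun ω => fun i : Fin (n + 2) => ω (i : ℕ)) =
        (L.map (fun ω => fun i : Fin (n + 1) => ω (i : ℕ))).bind
          (fun v => (K (v (Fin.last n))).map (Fin.snoc v))

/-- The `n`-step transition kernel `K^n`. -/
def kiter {E : Type*} [MeasurableSpace E] (K : Kernel E E) : ℕ → Kernel E E
  | 0 => Kernel.id
  | n + 1 => (kiter K n) ∘ₖ K

instance kiter.isMarkovKernel {E : Type*} [MeasurableSpace E] (K : Kernel E E)
    [IsMarkovKernel K] (n : ℕ) : IsMarkovKernel (kiter K n) := by
  induction n with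
  | zero => rw [kiter]; infer_instance
  | succ n ih => rw [kiter]; infer_instance


section HarrisHelpers

variable {S : Type*} [MeasurableSpace S]

lemma measurable_finSnoc (n : ℕ) :
    Measurable (fun p : (Fin (n+1) → S) × S => (Fin.snoc p.1 p.2 : Fin (n+2) → S)) := by
  refine measurable_pi_lambda _ (fun i => ?_)
  induction i using Fin.lastCases with
  | last => simpa only [Fin.snoc_last] using measurable_snd
  | cast j => simpa only [Fin.snoc_castSucc, Function.comp_def] using (measurable_pi_apply j).comp measurable_fst

lemma kiter_comp_comm (P : Kernel S S) [IsMarkovKernel P] (n : ℕ) :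
    kiter P n ∘ₖ P = P ∘ₖ kiter P n := by
  induction n with
  | zero => rw [kiter, Kernel.id_comp, Kernel.comp_id]
  | succ n ih =>
    rw [kiter, ih, Kernel.comp_assoc, ih]

lemma kiter_succ_apply' (P : Kernel S S) [IsMarkovKernel P] (n : ℕ) (x : S) :
    kiter P (n+1) x = (kiter P n x).bind P := by
  have : kiter P (n+1) = kiter P n ∘ₖ P := rfl
  rw [this, kiter_comp_comm, Kernel.comp_apply]

lemma markovPath_marginal (P : Kernel S S) [IsMarkovKernel P] (x : S)
    (L : Measure (ℕ → S)) (hL : IsMarkovPath P (Measure.dirac x) L) (n : ℕ) :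
    L.map (fun ω => ω n) = kiter P n x := by
  obtain ⟨hprob, h0, hstep⟩ := hL
  have hfmeas : ∀ k : ℕ, Measurable (fun ω : ℕ → S => fun i : Fin k => ω (i : ℕ)) :=
    fun k => measurable_pi_lambda _ (fun i => measurable_pi_apply _)
  have hfdd : ∀ k : ℕ,
      (L.map (fun ω => fun i : Fin (k+1) => ω (i : ℕ))).map (fun v => v (Fin.last k))
        = kiter P k x := by
    intro k
    induction k with
    | zero =>
      rw [Measure.map_map (measurable_pi_apply _) (hfmeas 1)]
      have he : ((fun v : Fin 1 → S => v (Fin.last 0)) ∘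
          (fun ω : ℕ → S => fun i : Fin 1 => ω (i : ℕ))) = fun ω : ℕ → S => ω 0 := rfl
      rw [he, h0]
      rw [show kiter P 0 = Kernel.id from rfl, Kernel.id_apply]
    | succ k ih =>
      set κ : Kernel (Fin (k+1) → S) (Fin (k+2) → S) :=
        Kernel.map ((Kernel.id : Kernel (Fin (k+1) → S) (Fin (k+1) → S)) ×ₖ
          (P.comap (fun v => v (Fin.last k)) (measurable_pi_apply _)))
          (fun p => Fin.snoc p.1 p.2) with hκdef
      have hκ_apply : ∀ v : Fin (k+1) → S,
          κ v = (P (v (Fin.last k))).map (Fin.snoc v) := by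
        intro v
        rw [hκdef, Kernel.map_apply _ (measurable_finSnoc k), Kernel.prod_apply,
          Kernel.id_apply, Kernel.comap_apply, Measure.dirac_prod,
          Measure.map_map (measurable_finSnoc k) measurable_prodMk_left]
        rfl
      have hlam : (fun v : Fin (k+1) → S => (P (v (Fin.last k))).map (Fin.snoc v)) = ⇑κ :=
        funext fun v => (hκ_apply v).symm
      refine Measure.ext fun B hB => ?_
      have hgmeas : Measurable (fun v : Fin (k+2) → S => v (Fin.last (k+1))) :=
        measurable_pi_apply _
      rw [Measure.map_apply hgmeas hB, hstep k, hlam,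
        Measure.bind_apply (hgmeas hB) κ.measurable.aemeasurable]
      have hint : ∀ v : Fin (k+1) → S,
          κ v ((fun w : Fin (k+2) → S => w (Fin.last (k+1))) ⁻¹' B)
            = P (v (Fin.last k)) B := by
        intro v
        have hsnocv : Measurable (fun a : S => (Fin.snoc v a : Fin (k+2) → S)) :=
          (measurable_finSnoc k).comp measurable_prodMk_left
        rw [hκ_apply v, Measure.map_apply hsnocv (hgmeas hB)]
        congr 1
        ext a
        simp [Fin.snoc_last]
      simp_rw [hint]
      rw [show (∫⁻ v, P (v (Fin.last k)) B
            ∂(L.map (fun ω => fun i : Fin (k+1) => ω (i : ℕ))))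
          = ∫⁻ z, P z B ∂((L.map (fun ω => fun i : Fin (k+1) => ω (i : ℕ))).map
              (fun v => v (Fin.last k))) from
        (lintegral_map (P.measurable_coe hB) (measurable_pi_apply _)).symm]
      rw [ih, kiter_succ_apply' P k x, Measure.bind_apply hB P.measurable.aemeasurable]
  have he : ((fun v : Fin (n+1) → S => v (Fin.last n)) ∘
      (fun ω : ℕ → S => fun i : Fin (n+1) => ω (i : ℕ))) = fun ω : ℕ → S => ω n := by
    funext ω; simp
  rw [← he, ← Measure.map_map (measurable_pi_apply _) (hfmeas (n+1)), hfdd n]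

lemma measurable_Gset (p : ℕ → S → S → ℝ≥0∞)
    (hp_meas : ∀ n : ℕ, Measurable (fun q : S × S => p n q.1 q.2)) (x : S) :
    MeasurableSet {y : S | ∃ n : ℕ, 0 < p (n+1) x y} := by
  have : {y : S | ∃ n : ℕ, 0 < p (n+1) x y}
      = ⋃ n : ℕ, (fun y => p (n+1) x y) ⁻¹' (Set.Ioi 0) := by
    ext y; simp
  rw [this]
  exact MeasurableSet.iUnion fun n =>
    ((hp_meas (n+1)).comp measurable_prodMk_left) measurableSet_Ioi

/-- Key consequence of recurrence: from every point, some `n`-step transition density is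
positive on part of every set of positive measure. -/
lemma harris_ac (P : Kernel S S) [IsMarkovKernel P]
    (Pr : S → Measure (ℕ → S))
    (hPr : ∀ x : S, IsMarkovPath P (Measure.dirac x) (Pr x))
    (m : Measure S) [SigmaFinite m]
    (hrec : ∀ A : Set S, MeasurableSet A → 0 < m A →
      ∀ x : S, Pr x {ω | hitTime A ω < ⊤} = 1)
    (p : ℕ → S → S → ℝ≥0∞)
    (hp_meas : ∀ n : ℕ, Measurable (fun q : S × S => p n q.1 q.2))
    (hp : ∀ n : ℕ, 1 ≤ n → ∀ x : S, (fun y => p n x y) =ᵐ[m] (kiter P n x).rnDeriv m)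
    (x : S) (B : Set S) (hB : MeasurableSet B) (hB0 : 0 < m B) :
    0 < m (B ∩ {y | ∃ n : ℕ, 0 < p (n+1) x y}) := by
  set G := {y : S | ∃ n : ℕ, 0 < p (n+1) x y} with hGdef
  have hG : MeasurableSet G := measurable_Gset p hp_meas x
  by_contra hc
  have hc0 : m (B ∩ G) = 0 := by simpa using hc
  choose t ht h1 h2 using fun n : ℕ =>
    (Measure.mutuallySingular_singularPart (kiter P (n+1) x) m)
  set B' := (B \ toMeasurable m (B ∩ G)) ∩ ⋂ n, t n with hB'def
  have hB' : MeasurableSet B' :=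
    (hB.diff (measurableSet_toMeasurable m _)).inter (MeasurableSet.iInter ht)
  have hBsub : B \ B' ⊆ toMeasurable m (B ∩ G) ∪ ⋃ n, (t n)ᶜ := by
    intro y hy
    rcases hy with ⟨hyB, hyB'⟩
    by_cases h : y ∈ toMeasurable m (B ∩ G)
    · exact Or.inl h
    · refine Or.inr ?_
      simp only [Set.mem_iUnion, Set.mem_compl_iff]
      by_contra hcon
      push_neg at hcon
      exact hyB' ⟨⟨hyB, h⟩, Set.mem_iInter.mpr hcon⟩
  have hnull : m (B \ B') = 0 := by
    refine le_antisymm (le_trans (measure_mono hBsub) ?_) zero_le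
    refine le_trans (measure_union_le _ _) ?_
    rw [measure_toMeasurable, hc0]
    simp only [zero_add]
    refine le_trans (measure_iUnion_le _) ?_
    simp [h2]
  have hB'0 : 0 < m B' := by
    by_contra h
    have h0 : m B' = 0 := by simpa using h
    have : m B ≤ m B' + m (B \ B') := by
      refine le_trans (measure_mono ?_) (measure_union_le _ _)
      intro y hy
      by_cases hyB' : y ∈ B' <;> [exact Or.inl hyB'; exact Or.inr ⟨hy, hyB'⟩]
    rw [h0, hnull] at this
    simpa using lt_of_lt_of_le hB0 this
  -- all (n+1)-step transition probabilities vanish on B'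
  have hzero : ∀ n : ℕ, kiter P (n+1) x B' = 0 := by
    intro n
    have hdec := Measure.haveLebesgueDecomposition_add (kiter P (n+1) x) m
    have happ : kiter P (n+1) x B'
        = (kiter P (n+1) x).singularPart m B'
          + m.withDensity ((kiter P (n+1) x).rnDeriv m) B' := by
      conv_lhs => rw [hdec]
      rfl
    have hsing : (kiter P (n+1) x).singularPart m B' = 0 := by
      refine le_antisymm (le_trans (measure_mono ?_) (h1 n).le) zero_le
      exact fun y hy => Set.mem_iInter.mp hy.2 n
    have hac : m.withDensity ((kiter P (n+1) x).rnDeriv m) B' = 0 := by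
      rw [withDensity_apply _ hB']
      have e1 : ∫⁻ y in B', (kiter P (n+1) x).rnDeriv m y ∂m
          = ∫⁻ y in B', p (n+1) x y ∂m :=
        lintegral_congr_ae (ae_restrict_of_ae (hp (n+1) (Nat.le_add_left 1 n) x).symm)
      rw [e1]
      have e2 : ∫⁻ y in B', p (n+1) x y ∂m = ∫⁻ _ in B', (0:ℝ≥0∞) ∂m := by
        refine setLIntegral_congr_fun hB' (fun y hy => ?_)
        have hyG : y ∉ G := fun hG' => hy.1.2 (subset_toMeasurable m _ ⟨hy.1.1, hG'⟩)
        have : ¬ 0 < p (n+1) x y := fun hpos => hyG ⟨n, hpos⟩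
        simpa using this
      rw [e2, lintegral_zero]
    rw [happ, hsing, hac, add_zero]
  -- contradiction with recurrence
  have hhit := hrec B' hB' hB'0 x
  have hbound : Pr x {ω | hitTime B' ω < ⊤} ≤ ∑' n : ℕ, Pr x {ω | ω (n+1) ∈ B'} := by
    refine le_trans (measure_mono ?_) (measure_iUnion_le _)
    intro ω hω
    have hne : {k : ℕ | 1 ≤ k ∧ ω k ∈ B'}.Nonempty := by
      by_contra h
      rw [Set.not_nonempty_iff_eq_empty] at h
      have : hitTime B' ω = ⊤ := by
        rw [hitTime, h, Set.image_empty, sInf_empty]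
      rw [Set.mem_setOf_eq, this] at hω
      exact lt_irrefl _ hω
    obtain ⟨k, hk1, hk2⟩ := hne
    refine Set.mem_iUnion.mpr ⟨k - 1, ?_⟩
    have : k - 1 + 1 = k := Nat.succ_pred_eq_of_pos hk1
    simpa [this] using hk2
  have hterm : ∀ n : ℕ, Pr x {ω | ω (n+1) ∈ B'} = 0 := by
    intro n
    have : Pr x {ω | ω (n+1) ∈ B'} = (Pr x).map (fun ω => ω (n+1)) B' := by
      rw [Measure.map_apply (measurable_pi_apply _) hB']
      rfl
    rw [this, markovPath_marginal P x (Pr x) (hPr x) (n+1), hzero n]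
  rw [hhit] at hbound
  simp only [hterm, tsum_zero] at hbound
  exact absurd hbound (by simp)

theorem harris_main
    (P : Kernel S S) [IsMarkovKernel P]
    (Pr : S → Measure (ℕ → S))
    (hPr : ∀ x : S, IsMarkovPath P (Measure.dirac x) (Pr x))
    (m : Measure S) [SigmaFinite m] (hm : m ≠ 0)
    (hrec : ∀ A : Set S, MeasurableSet A → 0 < m A →
      ∀ x : S, Pr x {ω | hitTime A ω < ⊤} = 1)
    (p : ℕ → S → S → ℝ≥0∞)
    (hp_meas : ∀ n : ℕ, Measurable (fun q : S × S => p n q.1 q.2))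
    (hp : ∀ n : ℕ, 1 ≤ n → ∀ x : S, (fun y => p n x y) =ᵐ[m] (kiter P n x).rnDeriv m)
    (r : ℝ≥0∞) (hr0 : 0 < r) (hr1 : r < 1) :
    ∃ A : Set S, MeasurableSet A ∧ 0 < m A ∧ m A < ⊤ ∧
      ∃ k : ℕ, 1 ≤ k ∧ ∃ s : ℝ≥0∞, 0 < s ∧
        ∀ x ∈ A, r * m A < m {y ∈ A | s < ∑ i ∈ Finset.Icc 1 k, p i x y} := by
  classical
  -- a set of positive finite measure
  obtain ⟨F, hFmeas, hF0, hFfin⟩ : ∃ F : Set S, MeasurableSet F ∧ 0 < m F ∧ m F < ⊤ := by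
    by_contra h
    push_neg at h
    have hnull : ∀ n : ℕ, m (spanningSets m n) = 0 := by
      intro n
      by_contra hn
      exact absurd (h _ (measurableSet_spanningSets m n) (pos_iff_ne_zero.mpr hn))
        (not_le.mpr (measure_spanningSets_lt_top m n))
    apply hm
    refine Measure.measure_univ_eq_zero.mp (le_antisymm ?_ zero_le)
    rw [← iUnion_spanningSets m]
    exact le_trans (measure_iUnion_le _) (by simp [hnull])
  -- notation
  set q : ℕ → S → S → ℝ≥0∞ := fun k x y => ∑ i ∈ Finset.Icc 1 k, p i x y with hqdef
  have hqmeas : ∀ k : ℕ, Measurable (fun pr : S × S => q k pr.1 pr.2) := by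
    intro k
    exact Finset.measurable_sum _ (fun i _ => hp_meas i)
  have hqmono : ∀ (x y : S), Monotone (fun k => q k x y) := by
    intro x y k l hkl
    exact Finset.sum_le_sum_of_subset (Finset.Icc_subset_Icc_right hkl)
  set D : ℕ → S → Set S := fun N x => F ∩ {y | ((N:ℝ≥0∞))⁻¹ < q N x y} with hDdef
  have hDsec : ∀ (N : ℕ) (x : S), MeasurableSet {y | ((N:ℝ≥0∞))⁻¹ < q N x y} := fun N x =>
    ((hqmeas N).comp measurable_prodMk_left) measurableSet_Ioi
  have hDmeas : ∀ N x, MeasurableSet (D N x) := fun N x => hFmeas.inter (hDsec N x)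
  have hDmono : ∀ x : S, Monotone (fun N => D N x) := by
    intro x N M hNM y hy
    refine ⟨hy.1, lt_of_le_of_lt (ENNReal.inv_le_inv.mpr (Nat.cast_le.mpr hNM)) ?_⟩
    exact lt_of_lt_of_le hy.2 (hqmono x y hNM)
  set φ : ℕ → S → ℝ≥0∞ := fun N x => m (D N x) with hφdef
  have hφle : ∀ N x, φ N x ≤ m F := fun N x => measure_mono Set.inter_subset_left
  have hφmeas : ∀ N : ℕ, Measurable (φ N) := by
    intro N
    have h1 : ∀ x, φ N x = (m.restrict F) (Prod.mk x ⁻¹' {pr : S × S | ((N:ℝ≥0∞))⁻¹ < q N pr.1 pr.2}) := by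
      intro x
      have hpre : Prod.mk x ⁻¹' {pr : S × S | ((N:ℝ≥0∞))⁻¹ < q N pr.1 pr.2}
          = {y | ((N:ℝ≥0∞))⁻¹ < q N x y} := rfl
      rw [hpre, Measure.restrict_apply (hDsec N x)]
      exact congrArg m (Set.inter_comm _ _)
    rw [funext h1]
    exact measurable_measure_prodMk_left ((hqmeas N) measurableSet_Ioi)
  have hφmono : Monotone φ := fun N M hNM x => measure_mono (hDmono x hNM)
  -- sup over N is m F, for every x
  have hsup : ∀ x : S, (⨆ N, φ N x) = m F := by
    intro x
    refine le_antisymm (iSup_le fun N => hφle N x) ?_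
    set G := {y : S | ∃ n : ℕ, 0 < p (n+1) x y} with hGdef
    have hG : MeasurableSet G := measurable_Gset p hp_meas x
    have hFG : m (F \ G) = 0 := by
      by_contra h
      have hpos := harris_ac P Pr hPr m hrec p hp_meas hp x (F \ G) (hFmeas.diff hG)
        (pos_iff_ne_zero.mpr h)
      have : (F \ G) ∩ G = ∅ := by ext y; simp +contextual [Set.mem_diff]
      rw [this] at hpos
      simpa using hpos
    have hsub : F ∩ G ⊆ ⋃ N, D N x := by
      intro y hy
      obtain ⟨hyF, n, hn⟩ := hy
      obtain ⟨j, hj⟩ := ENNReal.exists_inv_nat_lt (ne_of_gt hn)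
      refine Set.mem_iUnion.mpr ⟨max j (n+1), ⟨hyF, ?_⟩⟩
      refine lt_of_le_of_lt (ENNReal.inv_le_inv.mpr (Nat.cast_le.mpr (le_max_left j (n+1))))
        (lt_of_lt_of_le hj ?_)
      exact Finset.single_le_sum (f := fun i => p i x y) (fun i _ => zero_le)
        (Finset.mem_Icc.mpr ⟨Nat.le_add_left 1 n, le_max_right j (n+1)⟩)
    calc m F = m (F ∩ G) + m (F \ G) := (measure_inter_add_diff F hG).symm
      _ = m (F ∩ G) := by rw [hFG, add_zero]
      _ ≤ m (⋃ N, D N x) := measure_mono hsub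
      _ = ⨆ N, φ N x := Directed.measure_iUnion (hDmono x).directed_le
  -- monotone convergence
  have hMCT : (⨆ N, ∫⁻ x in F, φ N x ∂m) = m F * m F := by
    rw [← lintegral_iSup (fun N => hφmeas N) hφmono]
    calc ∫⁻ x in F, ⨆ N, φ N x ∂m = ∫⁻ _ in F, m F ∂m := lintegral_congr (fun x => hsup x)
      _ = m F * m F := by rw [setLIntegral_const]
  -- constants
  set δ : ℝ≥0∞ := (1 - r) * m F with hδdef
  have hδ0 : δ ≠ 0 := by
    exact mul_ne_zero (ne_of_gt (tsub_pos_of_lt hr1)) hF0.ne'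
  have hδle : δ ≤ m F := by
    calc δ ≤ 1 * m F := mul_le_mul_left tsub_le_self _
      _ = m F := one_mul _
  have hδtop : δ ≠ ⊤ := (lt_of_le_of_lt hδle hFfin).ne
  set ε : ℝ≥0∞ := δ / 4 with hεdef
  have hεδ : ε ≤ δ / 2 := ENNReal.div_le_div_left (by norm_num) δ
  have hεle : ε ≤ m F := le_trans (le_trans hεδ ENNReal.half_le_self) hδle
  have hε0 : ε ≠ 0 := by
    simp only [hεdef, ne_eq, ENNReal.div_eq_zero_iff]
    push_neg
    exact ⟨hδ0, by norm_num⟩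
  have hεtop : ε ≠ ⊤ := (lt_of_le_of_lt hεle hFfin).ne
  have hc0 : m F * m F ≠ 0 := mul_ne_zero hF0.ne' hF0.ne'
  have hctop : m F * m F ≠ ⊤ := ENNReal.mul_ne_top hFfin.ne hFfin.ne
  -- choose N
  have hlt : m F * m F - ε * ε / 2 < ⨆ N, ∫⁻ x in F, φ N x ∂m := by
    rw [hMCT]
    exact ENNReal.sub_lt_self hctop hc0
      (by simp only [ne_eq, ENNReal.div_eq_zero_iff]; push_neg;
          exact ⟨mul_ne_zero hε0 hε0, by norm_num⟩)
  obtain ⟨N₀, hN₀⟩ := lt_iSup_iff.mp hlt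
  set N := max 1 N₀ with hNdef
  have hN1 : 1 ≤ N := le_max_left _ _
  have hNbig : m F * m F - ε * ε / 2 < ∫⁻ x in F, φ N x ∂m :=
    lt_of_lt_of_le hN₀ (lintegral_mono (fun x => hφmono (le_max_right 1 N₀) x))
  -- the set A
  set A := F ∩ {x | m F - ε < φ N x} with hAdef
  have hAmeas : MeasurableSet A := hFmeas.inter ((hφmeas N) measurableSet_Ioi)
  have hAsubF : A ⊆ F := Set.inter_subset_left
  -- the bad part of F is small
  have hW : m (F \ A) < ε := by
    have hWsub : F \ A ⊆ F := Set.diff_subset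
    have hWbound : ∀ x ∈ F \ A, ε ≤ m F - φ N x := by
      intro x hx
      have hxle : φ N x ≤ m F - ε := by
        by_contra hxx
        exact hx.2 ⟨hx.1, not_le.mp hxx⟩
      have : φ N x + ε ≤ m F := by
        calc φ N x + ε ≤ (m F - ε) + ε := add_le_add_left hxle ε
          _ = m F := tsub_add_cancel_of_le hεle
      exact ENNReal.le_sub_of_add_le_left (ne_top_of_le_ne_top hFfin.ne (hφle N x)) this
    have hint1 : ε * m (F \ A) ≤ ∫⁻ x in F \ A, (m F - φ N x) ∂m := by
      rw [← setLIntegral_const (F \ A) ε]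
      exact setLIntegral_mono (measurable_const.sub (hφmeas N)) hWbound
    have hint2 : ∫⁻ x in F \ A, (m F - φ N x) ∂m ≤ ∫⁻ x in F, (m F - φ N x) ∂m :=
      lintegral_mono_set Set.diff_subset
    have hφint : ∫⁻ x in F, φ N x ∂m ≠ ⊤ := by
      refine ne_top_of_le_ne_top hctop ?_
      calc ∫⁻ x in F, φ N x ∂m ≤ ∫⁻ _ in F, m F ∂m := lintegral_mono (fun x => hφle N x)
        _ = m F * m F := by rw [setLIntegral_const]
    have hint3 : ∫⁻ x in F, (m F - φ N x) ∂m = m F * m F - ∫⁻ x in F, φ N x ∂m := by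
      rw [lintegral_sub (hφmeas N) hφint (ae_of_all _ (fun x => hφle N x)), setLIntegral_const]
    have hint4 : m F * m F - ∫⁻ x in F, φ N x ∂m ≤ ε * ε / 2 := by
      refine tsub_le_iff_right.mpr ?_
      exact tsub_le_iff_left.mp hNbig.le
    have : ε * m (F \ A) < ε * ε :=
      lt_of_le_of_lt (le_trans (le_trans hint1 hint2) (le_trans hint3.le hint4))
        (ENNReal.half_lt_self (mul_ne_zero hε0 hε0) (ENNReal.mul_ne_top hεtop hεtop))
    exact (ENNReal.mul_lt_mul_iff_right hε0 hεtop).mp this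
  -- m A is positive and finite
  have hAfin : m A < ⊤ := lt_of_le_of_lt (measure_mono hAsubF) hFfin
  have hA0 : 0 < m A := by
    by_contra h
    have h0 : m A = 0 := by simpa using h
    have : m F ≤ m A + m (F \ A) := by
      refine le_trans (measure_mono ?_) (measure_union_le _ _)
      intro y hy
      by_cases hyA : y ∈ A <;> [exact Or.inl hyA; exact Or.inr ⟨hy, hyA⟩]
    rw [h0, zero_add] at this
    have : m F < ε := lt_of_le_of_lt this hW
    have h2 : ε < m F :=
      lt_of_le_of_lt (le_trans hεδ (ENNReal.div_le_div_right hδle 2))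
        (ENNReal.half_lt_self hF0.ne' hFfin.ne)
    exact lt_irrefl _ (lt_trans this h2)
  refine ⟨A, hAmeas, hA0, hAfin, N, hN1, ((N:ℝ≥0∞))⁻¹,
    ENNReal.inv_pos.mpr (ENNReal.natCast_ne_top N), ?_⟩
  intro x hx
  set T := {y ∈ A | ((N:ℝ≥0∞))⁻¹ < q N x y} with hTdef
  have hTle : m T ≤ m F := measure_mono (fun y hy => hAsubF hy.1)
  have h1 : φ N x ≤ m T + m (F \ A) := by
    refine le_trans (measure_mono ?_) (measure_union_le _ _)
    intro y hy
    by_cases hyA : y ∈ A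
    · exact Or.inl ⟨hyA, hy.2⟩
    · exact Or.inr ⟨hy.1, hyA⟩
  have h2 : φ N x < m T + ε :=
    lt_of_le_of_lt h1 (ENNReal.add_lt_add_left (lt_of_le_of_lt hTle hFfin).ne hW)
  have h3 : m F - ε < m T + ε := lt_trans hx.2 h2
  have h4 : m F < m T + ε + ε :=
    (ENNReal.sub_lt_iff_lt_right hεtop hεle).mp h3
  have h5 : m F < m T + δ := by
    refine lt_of_lt_of_le h4 ?_
    rw [add_assoc]
    refine add_le_add_right ?_ (m T)
    calc ε + ε ≤ δ / 2 + δ / 2 := add_le_add hεδ hεδ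
      _ = δ := ENNReal.add_halves δ
  have hkey : r * m F < m T := by
    have hsplit : r * m F + δ = m F := by
      have h1r : r + (1 - r) = 1 := add_tsub_cancel_of_le hr1.le
      calc r * m F + δ = (r + (1 - r)) * m F := by rw [add_mul, hδdef]
        _ = m F := by rw [h1r, one_mul]
    have hfin : r * m F + δ < m T + δ := by rw [hsplit]; exact h5
    exact (ENNReal.add_lt_add_iff_right hδtop).mp hfin
  exact lt_of_le_of_lt (mul_le_mul_right (measure_mono hAsubF) r) hkey
end HarrisHelpers

/-- **Harris's technical lemma.** If the chain is `m`-recurrent then for any `r ∈ (0,1)`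
there are a set `A` with `0 < m (A) < ∞`, an integer `k ≥ 1` and a constant `s > 0` such
that `m {y ∈ A : p^1 (x,y) + ⋯ + p^k (x,y) > s} > r · m (A)` for all `x ∈ A`.  Here `p n`
is a jointly measurable version of the density with respect to `m` of the absolutely
continuous part of the `n`-step transition probability. -/
theorem harris_lemma_minorization_set
    {S : Type*} [MeasurableSpace S] [MeasurableSpace.CountablyGenerated S]
    (P : Kernel S S) [IsMarkovKernel P]
    (Pr : S → Measure (ℕ → S))
    (hPr : ∀ x : S, IsMarkovPath P (Measure.dirac x) (Pr x))
    (m : Measure S) [SigmaFinite m] (hm : m ≠ 0)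
    (hrec : ∀ A : Set S, MeasurableSet A → 0 < m A →
      ∀ x : S, Pr x {ω | hitTime A ω < ⊤} = 1)
    (p : ℕ → S → S → ℝ≥0∞)
    (hp_meas : ∀ n : ℕ, Measurable (fun q : S × S => p n q.1 q.2))
    (hp : ∀ n : ℕ, 1 ≤ n → ∀ x : S, (fun y => p n x y) =ᵐ[m] (kiter P n x).rnDeriv m)
    (r : ℝ≥0∞) (hr0 : 0 < r) (hr1 : r < 1) :
    ∃ A : Set S, MeasurableSet A ∧ 0 < m A ∧ m A < ⊤ ∧
      ∃ k : ℕ, 1 ≤ k ∧ ∃ s : ℝ≥0∞, 0 < s ∧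
        ∀ x ∈ A, r * m A < m {y ∈ A | s < ∑ i ∈ Finset.Icc 1 k, p i x y} := by
  exact harris_main P Pr hPr m hm hrec p hp_meas hp r hr0 hr1
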